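/- For the DLP ⟨{p., q ← p.}, {∼p ← ∼q.}⟩, the set of JU-models is exactly { ∅, {p, q} }; in particular JU-models need not be subset-minimal among themselves. -/
import Mathlib


inductive Lit (α : Type) where
  | pos : α → Lit α
  | neg : α → Lit α

structure Rule (α : Type) where
  head : Set (Lit α)
  body : Set (Lit α)

def litSat {α : Type} (J : Set α) : Lit α → Prop
  | .pos a => a ∈ J
  | .neg a => a ∉ J

def ruleSat {α : Type} (J : Set α) (π : Rule α) : Prop :=
  (∃ L ∈ π.body, ¬ litSat J L) ∨ (∃ L ∈ π.head, litSat J L)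

def progSat {α : Type} (J : Set α) (P : Set (Rule α)) : Prop :=
  ∀ π ∈ P, ruleSat J π

/-- A rule is kept in the reduct w.r.t. `J` iff `J` does not satisfy the rule `(∼H⁻, ∼B⁻)`. -/
def kept {α : Type} (J : Set α) (π : Rule α) : Prop :=
  (∀ a : α, Lit.neg a ∈ π.body → a ∉ J) ∧ (∀ a : α, Lit.neg a ∈ π.head → a ∈ J)

/-- The positive-part rule `(H⁺, B⁺)`. -/
def reductRule {α : Type} (π : Rule α) : Rule α :=
  ⟨{L ∈ π.head | ∃ a, L = Lit.pos a}, {L ∈ π.body | ∃ a, L = Lit.pos a}⟩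

def reduct {α : Type} (J : Set α) (P : Set (Rule α)) : Set (Rule α) :=
  {ρ | ∃ π ∈ P, kept J π ∧ ρ = reductRule π}

/-- `J` is a stable model of `P`: a subset-minimal classical model of the reduct `P^J`. -/
def stableModel {α : Type} (P : Set (Rule α)) (J : Set α) : Prop :=
  progSat J (reduct J P) ∧ ∀ I : Set α, progSat I (reduct J P) → ¬ I ⊂ J

/-- `⟨I, J⟩` is an RE-model of rule `π` iff `I ⊨ π^J`. -/
def reRule {α : Type} (π : Rule α) (I J : Set α) : Prop :=
  kept J π → ruleSat I (reductRule π)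

/-- `⟨I, J⟩` is an HT-model of rule `π` iff `J ⊨ π` and `I ⊨ π^J`. -/
def htRule {α : Type} (π : Rule α) (I J : Set α) : Prop :=
  ruleSat J π ∧ reRule π I J

def htProg {α : Type} (P : Set (Rule α)) (I J : Set α) : Prop :=
  ∀ π ∈ P, htRule π I J

def reProg {α : Type} (P : Set (Rule α)) (I J : Set α) : Prop :=
  ∀ π ∈ P, reRule π I J

def negLit {α : Type} : Lit α → Lit α
  | .pos a => .neg a
  | .neg a => .pos a

/-- Rules `π`, `σ` are in conflict iff `head π ≠ ∅` and `head π = ∼ head σ`. -/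
def conflict {α : Type} (π σ : Rule α) : Prop :=
  π.head ≠ ∅ ∧ π.head = negLit '' σ.head

def bodySat {α : Type} (J : Set α) (σ : Rule α) : Prop :=
  ∀ L ∈ σ.body, litSat J L

/-- JU-rejected rules for a DLP of length two `⟨P₀, P₁⟩`. -/
def rejJU2 {α : Type} (P₀ P₁ : Set (Rule α)) (J : Set α) : Set (Rule α) :=
  {π | π ∈ P₀ ∧ ∃ σ ∈ P₁, conflict π σ ∧ bodySat J σ}

/-- JU-models of a DLP of length two. -/
def JUmodel2 {α : Type} (P₀ P₁ : Set (Rule α)) (J : Set α) : Prop :=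
  stableModel ((P₀ ∪ P₁) \ rejJU2 P₀ P₁ J) J

lemma progSat_reduct_iff {α : Type} (I J : Set α) (P : Set (Rule α)) :
    progSat I (reduct J P) ↔ ∀ π ∈ P, kept J π → ruleSat I (reductRule π) := by
  constructor
  · intro h π hπ hk; exact h _ ⟨π, hπ, hk, rfl⟩
  · rintro h ρ ⟨π, hπ, hk, rfl⟩; exact h π hπ hk

section aux
variable {α : Type} (p q : α)

@[simp] lemma litSat_pos (I : Set α) (a : α) : litSat I (Lit.pos a) ↔ a ∈ I := Iff.rfl
@[simp] lemma litSat_neg (I : Set α) (a : α) : litSat I (Lit.neg a) ↔ a ∉ I := Iff.rfl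

lemma satR1 (I : Set α) :
    ruleSat I (reductRule (⟨{Lit.pos p}, ∅⟩ : Rule α)) ↔ p ∈ I := by
  simp [ruleSat, reductRule, and_assoc]

lemma satR2 (I : Set α) :
    ruleSat I (reductRule (⟨{Lit.pos q}, {Lit.pos p}⟩ : Rule α)) ↔ (p ∈ I → q ∈ I) := by
  simp [ruleSat, reductRule, and_assoc]
  tauto

lemma satR3 (I : Set α) :
    ¬ ruleSat I (reductRule (⟨{Lit.neg p}, {Lit.neg q}⟩ : Rule α)) := by
  simp [ruleSat, reductRule, and_assoc]

lemma keptR1 (J : Set α) : kept J (⟨{Lit.pos p}, ∅⟩ : Rule α) := by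
  constructor <;> simp

lemma keptR2 (J : Set α) : kept J (⟨{Lit.pos q}, {Lit.pos p}⟩ : Rule α) := by
  constructor <;> simp

lemma keptR3 (J : Set α) :
    kept J (⟨{Lit.neg p}, {Lit.neg q}⟩ : Rule α) ↔ q ∉ J ∧ p ∈ J := by
  simp [kept]

lemma bodySatR3 (J : Set α) :
    bodySat J (⟨{Lit.neg p}, {Lit.neg q}⟩ : Rule α) ↔ q ∉ J := by
  simp [bodySat]

lemma conflictR1R3 :
    conflict (⟨{Lit.pos p}, ∅⟩ : Rule α) (⟨{Lit.neg p}, {Lit.neg q}⟩ : Rule α) := by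
  constructor
  · intro h
    have : (Lit.pos p : Lit α) ∈ (∅ : Set (Lit α)) := h ▸ rfl
    exact this
  · simp [negLit]

lemma conflictR2R3 (hpq : p ≠ q) :
    ¬ conflict (⟨{Lit.pos q}, {Lit.pos p}⟩ : Rule α) (⟨{Lit.neg p}, {Lit.neg q}⟩ : Rule α) := by
  rintro ⟨-, h⟩
  simp only [Set.image_singleton, negLit] at h
  have : (Lit.pos q : Lit α) ∈ ({Lit.pos p} : Set (Lit α)) := h ▸ rfl
  simp only [Set.mem_singleton_iff, Lit.pos.injEq] at this
  exact hpq this.symm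

lemma rejIff (hpq : p ≠ q) (J : Set α) (π : Rule α) :
    π ∈ rejJU2 {⟨{Lit.pos p}, ∅⟩, ⟨{Lit.pos q}, {Lit.pos p}⟩}
          {⟨{Lit.neg p}, {Lit.neg q}⟩} J
      ↔ (π = ⟨{Lit.pos p}, ∅⟩ ∧ q ∉ J) := by
  constructor
  · rintro ⟨hP0, σ, hσ, hc, hb⟩
    have hσ' : σ = ⟨{Lit.neg p}, {Lit.neg q}⟩ := hσ
    subst hσ'
    have hq := (bodySatR3 p q J).mp hb
    rcases hP0 with h | h
    · exact ⟨h, hq⟩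
    · have h2 : π = ⟨{Lit.pos q}, {Lit.pos p}⟩ := h
      subst h2
      exact absurd hc (conflictR2R3 p q hpq)
  · rintro ⟨rfl, hq⟩
    exact ⟨Or.inl rfl, _, rfl, conflictR1R3 p q, (bodySatR3 p q J).mpr hq⟩

lemma r2ne (hpq : p ≠ q) :
    (⟨{Lit.pos q}, {Lit.pos p}⟩ : Rule α) ≠ ⟨{Lit.pos p}, ∅⟩ := by
  intro h
  rw [Rule.mk.injEq] at h
  have : (Lit.pos q : Lit α) ∈ ({Lit.pos p} : Set (Lit α)) := h.1 ▸ rfl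
  simp only [Set.mem_singleton_iff, Lit.pos.injEq] at this
  exact hpq this.symm

lemma r3ne : (⟨{Lit.neg p}, {Lit.neg q}⟩ : Rule α) ≠ ⟨{Lit.pos p}, ∅⟩ := by
  intro h
  rw [Rule.mk.injEq] at h
  have : (Lit.neg p : Lit α) ∈ ({Lit.pos p} : Set (Lit α)) := h.1 ▸ rfl
  simp at this

lemma memP' (hpq : p ≠ q) (J : Set α) (π : Rule α) :
    π ∈ (({⟨{Lit.pos p}, ∅⟩, ⟨{Lit.pos q}, {Lit.pos p}⟩} ∪ {⟨{Lit.neg p}, {Lit.neg q}⟩})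
          \ rejJU2 {⟨{Lit.pos p}, ∅⟩, ⟨{Lit.pos q}, {Lit.pos p}⟩}
              {⟨{Lit.neg p}, {Lit.neg q}⟩} J : Set (Rule α))
      ↔ ((π = ⟨{Lit.pos p}, ∅⟩ ∧ q ∈ J) ∨ π = ⟨{Lit.pos q}, {Lit.pos p}⟩
          ∨ π = ⟨{Lit.neg p}, {Lit.neg q}⟩) := by
  have h2 := r2ne p q hpq
  have h3 := r3ne p q
  simp only [Set.mem_diff, Set.mem_union, Set.mem_insert_iff, Set.mem_singleton_iff,
    rejIff p q hpq J]
  constructor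
  · rintro ⟨(rfl | rfl) | rfl, hrej⟩
    · refine Or.inl ⟨rfl, ?_⟩
      by_contra hq
      exact hrej ⟨rfl, hq⟩
    · exact Or.inr (Or.inl rfl)
    · exact Or.inr (Or.inr rfl)
  · rintro (⟨rfl, hq⟩ | rfl | rfl)
    · exact ⟨Or.inl (Or.inl rfl), fun h => h.2 hq⟩
    · exact ⟨Or.inl (Or.inr rfl), fun h => h2 h.1⟩
    · exact ⟨Or.inr rfl, fun h => h3 h.1⟩

end aux

/-- The JU-models of the DLP `⟨{p., q ← p.}, {∼p ← ∼q.}⟩` are exactly `∅` and `{p, q}`;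
in particular JU-models need not be subset-minimal among themselves. -/
theorem stmt15 {α : Type} (p q : α) (hpq : p ≠ q) :
    {J : Set α | JUmodel2 {⟨{Lit.pos p}, ∅⟩, ⟨{Lit.pos q}, {Lit.pos p}⟩}
                          {⟨{Lit.neg p}, {Lit.neg q}⟩} J}
      = {∅, {p, q}} := by
  ext J
  simp only [Set.mem_setOf_eq, Set.mem_insert_iff, Set.mem_singleton_iff]
  have hC : ∀ I : Set α, progSat I (reduct J
      ((({⟨{Lit.pos p}, ∅⟩, ⟨{Lit.pos q}, {Lit.pos p}⟩} ∪ {⟨{Lit.neg p}, {Lit.neg q}⟩})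
        \ rejJU2 {⟨{Lit.pos p}, ∅⟩, ⟨{Lit.pos q}, {Lit.pos p}⟩}
            {⟨{Lit.neg p}, {Lit.neg q}⟩} J)))
      ↔ ((q ∈ J → p ∈ I) ∧ (p ∈ I → q ∈ I) ∧ ¬(q ∉ J ∧ p ∈ J)) := by
    intro I
    rw [progSat_reduct_iff]
    constructor
    · intro h
      refine ⟨?_, ?_, ?_⟩
      · intro hq
        exact (satR1 p I).mp (h _ ((memP' p q hpq J _).mpr (Or.inl ⟨rfl, hq⟩)) (keptR1 p J))
      · exact (satR2 p q I).mp
          (h _ ((memP' p q hpq J _).mpr (Or.inr (Or.inl rfl))) (keptR2 p q J))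
      · intro hk
        exact satR3 p q I
          (h _ ((memP' p q hpq J _).mpr (Or.inr (Or.inr rfl))) ((keptR3 p q J).mpr hk))
    · rintro ⟨h1, h2, h3⟩ π hπ hk
      rcases (memP' p q hpq J _).mp hπ with ⟨rfl, hq⟩ | rfl | rfl
      · exact (satR1 p I).mpr (h1 hq)
      · exact (satR2 p q I).mpr h2
      · exact absurd ((keptR3 p q J).mp hk) h3
  unfold JUmodel2 stableModel
  rw [hC J]
  constructor
  · rintro ⟨⟨h1, h2, h3⟩, hmin⟩
    by_cases hq : q ∈ J
    · right
      have hpJ := h1 hq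
      have hsub : {p, q} ⊆ J := by
        rintro x (rfl | rfl); exacts [hpJ, hq]
      have hnot := hmin {p, q} ((hC {p, q}).mpr ⟨fun _ => Or.inl rfl, fun _ => Or.inr rfl, h3⟩)
      have : J ⊆ {p, q} := by
        by_contra hns
        exact hnot ⟨hsub, hns⟩
      exact Set.Subset.antisymm this hsub
    · left
      have hp : p ∉ J := fun hp => h3 ⟨hq, hp⟩
      have hnot := hmin ∅ ((hC ∅).mpr
        ⟨fun h => absurd h hq, fun h => absurd h (Set.notMem_empty p), h3⟩)
      by_contra hne
      exact hnot ⟨Set.empty_subset J, fun h => hne (Set.subset_empty_iff.mp h)⟩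
  · rintro (rfl | rfl)
    · refine ⟨⟨fun h => absurd h (Set.notMem_empty q), fun h => absurd h (Set.notMem_empty p),
        fun h => h.2⟩, ?_⟩
      intro I _ hI
      exact hI.2 (Set.empty_subset I)
    · refine ⟨⟨fun _ => Or.inl rfl, fun _ => Or.inr rfl, fun h => h.1 (Or.inr rfl)⟩, ?_⟩
      intro I hI hss
      rw [hC I] at hI
      have hp : p ∈ I := hI.1 (Or.inr rfl)
      have hq : q ∈ I := hI.2.1 hp
      exact hss.2 (by rintro x (rfl | rfl); exacts [hp, hq])
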